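/- arXiv:math/9905108 — 3 statements merged into one kernel-verified Lean document; each statement's English description precedes it below -/
import Mathlib

section
/- Let a, b, p, q ≥ 1 be integers with a + b + 1 = p + q. The plane curve germ at the origin defined (in the chart y = 1, coordinates (x,z)) by x^{a+1} + x z^{a+b} − t z^q = 0 has, for t ≠ 0, Milnor number a(q − 1) (Brieskorn type (a+1, q)), and for t = 0 Milnor number a² + ab + b. Consequently the jump of the Milnor number at t = 0 equals b + ap. -/
open MvPolynomial

/-- The Milnor number of an isolated plane curve singularity germ `g` at the origin:
the dimension over `ℂ` of the quotient of the formal power series ring `ℂ[[x,z]]`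
(playing the role of the local ring `ℂ{x,z}`) by the Jacobian ideal `(∂g/∂x, ∂g/∂z)`. -/
noncomputable def milnor (g : MvPolynomial (Fin 2) ℂ) : ℕ :=
  Module.finrank ℂ
    ((MvPowerSeries (Fin 2) ℂ) ⧸
      Ideal.span {(↑(pderiv 0 g) : MvPowerSeries (Fin 2) ℂ),
                  (↑(pderiv 1 g) : MvPowerSeries (Fin 2) ℂ)})

noncomputable section
namespace Stmt6

abbrev R2 := MvPowerSeries (Fin 2) ℂ

def m2 (i j : ℕ) : Fin 2 →₀ ℕ := Finsupp.single 0 i + Finsupp.single 1 j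

@[simp] lemma m2_apply0 (i j : ℕ) : m2 i j 0 = i := by
  simp [m2, Finsupp.single_apply]

@[simp] lemma m2_apply1 (i j : ℕ) : m2 i j 1 = j := by
  simp [m2, Finsupp.single_apply]

lemma eq_m2 (d : Fin 2 →₀ ℕ) : d = m2 (d 0) (d 1) := by
  ext k; fin_cases k <;> simp [m2, Finsupp.single_apply]

lemma m2_le_iff {i j i' j' : ℕ} : m2 i j ≤ m2 i' j' ↔ i ≤ i' ∧ j ≤ j' := by
  constructor
  · intro h; exact ⟨by simpa using h 0, by simpa using h 1⟩
  · rintro ⟨h1, h2⟩ k; fin_cases k <;> simpa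

lemma m2_sub (i j i' j' : ℕ) : m2 i' j' - m2 i j = m2 (i' - i) (j' - j) := by
  ext k; fin_cases k <;> simp [Finsupp.tsub_apply]

lemma m2_eq_iff {i j i' j' : ℕ} : m2 i j = m2 i' j' ↔ i = i' ∧ j = j' := by
  constructor
  · intro h
    constructor
    · have := congrArg (fun d => d 0) h; simpa using this
    · have := congrArg (fun d => d 1) h; simpa using this
  · rintro ⟨rfl, rfl⟩; rfl

def cf (i j : ℕ) : R2 →ₗ[ℂ] ℂ := MvPowerSeries.coeff (R := ℂ) (m2 i j)

lemma ext_cf {f g : R2} (h : ∀ i j, cf i j f = cf i j g) : f = g := by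
  apply MvPowerSeries.ext
  intro d
  rw [eq_m2 d]
  exact h _ _

def ofCf (F : ℕ → ℕ → ℂ) : R2 := fun d => F (d 0) (d 1)

@[simp] lemma cf_ofCf (F : ℕ → ℕ → ℂ) (i j : ℕ) : cf i j (ofCf F) = F i j := by
  simp [cf, ofCf, MvPowerSeries.coeff_apply]

lemma cf_monomial (c : ℂ) (i j i' j' : ℕ) :
    cf i' j' (MvPowerSeries.monomial (R := ℂ) (m2 i j) c) = if i = i' ∧ j = j' then c else 0 := by
  rw [cf, MvPowerSeries.coeff_monomial]
  simp only [eq_comm (a := m2 i' j'), m2_eq_iff]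

lemma cf_monomial_mul (c : ℂ) (f : R2) (i j i' j' : ℕ) :
    cf i' j' (MvPowerSeries.monomial (R := ℂ) (m2 i j) c * f)
      = if i ≤ i' ∧ j ≤ j' then c * cf (i' - i) (j' - j) f else 0 := by
  rw [cf, MvPowerSeries.coeff_monomial_mul]
  simp only [m2_le_iff, m2_sub]
  rfl

lemma cf_mul_monomial (c : ℂ) (f : R2) (i j i' j' : ℕ) :
    cf i' j' (f * MvPowerSeries.monomial (R := ℂ) (m2 i j) c)
      = if i ≤ i' ∧ j ≤ j' then cf (i' - i) (j' - j) f * c else 0 := by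
  rw [cf, MvPowerSeries.coeff_mul_monomial]
  simp only [m2_le_iff, m2_sub]
  rfl

theorem finrank_quotient_eq {ι : Type} [Fintype ι] (I : Ideal R2)
    (NF : R2 →ₗ[ℂ] (ι → ℂ)) (σ : (ι → ℂ) →ₗ[ℂ] R2)
    (h1 : ∀ f ∈ I, NF f = 0) (h2 : ∀ f, f - σ (NF f) ∈ I) (h3 : ∀ c, NF (σ c) = c) :
    Module.finrank ℂ (R2 ⧸ I) = Fintype.card ι := by
  let φ : (ι → ℂ) →ₗ[ℂ] (R2 ⧸ I) := (Ideal.Quotient.mkₐ ℂ I).toLinearMap.comp σ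
  have hφ : ∀ c, φ c = Ideal.Quotient.mk I (σ c) := fun c => rfl
  have hbij : Function.Bijective φ := by
    constructor
    · intro c c' h
      rw [hφ, hφ, Ideal.Quotient.eq] at h
      have : NF (σ c - σ c') = 0 := h1 _ h
      rw [map_sub, h3, h3, sub_eq_zero] at this
      exact this
    · intro x
      obtain ⟨f, rfl⟩ := Ideal.Quotient.mk_surjective x
      exact ⟨NF f, by rw [hφ, Ideal.Quotient.eq]; simpa [neg_sub] using I.neg_mem (h2 f)⟩
  have := (LinearEquiv.ofBijective φ hbij).finrank_eq
  rw [← this, Module.finrank_pi]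


section Case1

variable (A B : ℕ)

def sig1 : ((Fin A × Fin B) → ℂ) →ₗ[ℂ] R2 :=
  ∑ p : Fin A × Fin B, (MvPowerSeries.monomial (R := ℂ) (m2 p.1 p.2)).comp (LinearMap.proj p)

lemma sig1_apply (c : (Fin A × Fin B) → ℂ) :
    sig1 A B c = ∑ p : Fin A × Fin B, MvPowerSeries.monomial (R := ℂ) (m2 p.1 p.2) (c p) := by
  simp [sig1]

lemma cf_sig1 (c : (Fin A × Fin B) → ℂ) (i j : ℕ) :
    cf i j (sig1 A B c) = if h : i < A ∧ j < B then c (⟨i, h.1⟩, ⟨j, h.2⟩) else 0 := by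
  rw [sig1_apply, map_sum]
  simp only [cf_monomial]
  by_cases h : i < A ∧ j < B
  · rw [dif_pos h, Finset.sum_eq_single ((⟨i, h.1⟩, ⟨j, h.2⟩) : Fin A × Fin B)]
    · simp
    · intro p _ hne
      rw [if_neg]
      rintro ⟨h1, h2⟩
      exact hne (Prod.ext (Fin.ext h1) (Fin.ext h2))
    · intro h'; exact absurd (Finset.mem_univ _) h'
  · rw [dif_neg h, Finset.sum_eq_zero]
    intro p _
    rw [if_neg]
    rintro ⟨h1, h2⟩
    exact h ⟨h1 ▸ p.1.isLt, h2 ▸ p.2.isLt⟩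

def NF1 : R2 →ₗ[ℂ] ((Fin A × Fin B) → ℂ) :=
  LinearMap.pi (fun p => cf p.1 p.2)

lemma NF1_apply (f : R2) (p : Fin A × Fin B) : NF1 A B f p = cf p.1 p.2 f := rfl

theorem finrank_span_monomial_pair :
    Module.finrank ℂ (R2 ⧸ Ideal.span
      {MvPowerSeries.monomial (R := ℂ) (m2 A 0) (1 : ℂ), MvPowerSeries.monomial (R := ℂ) (m2 0 B) (1 : ℂ)})
      = A * B := by
  rw [show A * B = Fintype.card (Fin A × Fin B) by simp]
  apply finrank_quotient_eq _ (NF1 A B) (sig1 A B)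
  · -- h1
    intro f hf
    obtain ⟨r, s, rfl⟩ := Ideal.mem_span_pair.mp hf
    funext p
    obtain ⟨hp1, hp2⟩ : (p.1 : ℕ) < A ∧ (p.2 : ℕ) < B := ⟨p.1.isLt, p.2.isLt⟩
    rw [NF1_apply, map_add, mul_comm r, mul_comm s, cf_monomial_mul, cf_monomial_mul,
      if_neg (show ¬(A ≤ (p.1:ℕ) ∧ 0 ≤ (p.2:ℕ)) by rintro ⟨h1, -⟩; omega),
      if_neg (show ¬(0 ≤ (p.1:ℕ) ∧ B ≤ (p.2:ℕ)) by rintro ⟨-, h2⟩; omega),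
      add_zero, Pi.zero_apply]
  · -- h2
    intro f
    rw [Ideal.mem_span_pair]
    refine ⟨ofCf (fun i j => cf (i + A) j f),
            ofCf (fun i j => if i < A then cf i (j + B) f else 0), ?_⟩
    rw [mul_comm _ (MvPowerSeries.monomial (R := ℂ) (m2 A 0) (1:ℂ)),
        mul_comm _ (MvPowerSeries.monomial (R := ℂ) (m2 0 B) (1:ℂ))]
    apply ext_cf
    intro i j
    rw [map_add, map_sub, cf_monomial_mul, cf_monomial_mul, cf_sig1]
    by_cases hA : A ≤ i <;> by_cases hB : B ≤ j
    · rw [if_pos ⟨hA, Nat.zero_le j⟩, if_pos ⟨Nat.zero_le i, hB⟩,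
        dif_neg (show ¬(i < A ∧ j < B) by omega), cf_ofCf, cf_ofCf,
        Nat.sub_zero, Nat.sub_zero, Nat.sub_add_cancel hA,
        if_neg (show ¬ i < A by omega)]
      ring
    · rw [if_pos ⟨hA, Nat.zero_le j⟩, if_neg (show ¬((0:ℕ) ≤ i ∧ B ≤ j) by omega),
        dif_neg (show ¬(i < A ∧ j < B) by omega), cf_ofCf,
        Nat.sub_zero, Nat.sub_add_cancel hA]
      ring
    · rw [if_neg (show ¬(A ≤ i ∧ (0:ℕ) ≤ j) by omega), if_pos ⟨Nat.zero_le i, hB⟩,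
        dif_neg (show ¬(i < A ∧ j < B) by omega), cf_ofCf,
        Nat.sub_zero, if_pos (show i < A by omega), Nat.sub_add_cancel hB]
      ring
    · rw [if_neg (show ¬(A ≤ i ∧ (0:ℕ) ≤ j) by omega), if_neg (show ¬((0:ℕ) ≤ i ∧ B ≤ j) by omega),
        dif_pos (show i < A ∧ j < B by omega), NF1_apply]
      ring
  · -- h3
    intro c
    funext p
    rw [NF1_apply, cf_sig1, dif_pos ⟨p.1.isLt, p.2.isLt⟩]

end Case1

section Case2

/-- index set for the basis in the `t = 0` case -/
abbrev idx2 (a m : ℕ) := Fin (2*m-1) ⊕ (Fin (a-1) × Fin (m-1))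

def loc (a m : ℕ) : idx2 a m → ℕ × ℕ :=
  Sum.elim (fun j => (0, (j:ℕ))) (fun q => ((q.1:ℕ)+1, (q.2:ℕ)))

lemma loc_inj (a m : ℕ) : Function.Injective (loc a m) := by
  rintro (j1 | q1) (j2 | q2) h <;> simp [loc, Prod.ext_iff] at h
  · exact congrArg Sum.inl (Fin.ext h)
  · exact congrArg Sum.inr (Prod.ext (Fin.ext h.1) (Fin.ext h.2))

def sig2 (a m : ℕ) : (idx2 a m → ℂ) →ₗ[ℂ] R2 :=
  ∑ p : idx2 a m, (MvPowerSeries.monomial (R := ℂ) (m2 (loc a m p).1 (loc a m p).2)).comp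
    (LinearMap.proj p)

lemma cf_sig2 (a m : ℕ) (c : idx2 a m → ℂ) (i j : ℕ) :
    cf i j (sig2 a m c) =
      ∑ p : idx2 a m, if (loc a m p).1 = i ∧ (loc a m p).2 = j then c p else 0 := by
  rw [show sig2 a m c = ∑ p : idx2 a m, MvPowerSeries.monomial (R := ℂ) (m2 (loc a m p).1
      (loc a m p).2) (c p) by simp [sig2], map_sum]
  simp only [cf_monomial]

lemma cf_sig2_inl {a m : ℕ} (c : idx2 a m → ℂ) {j : ℕ} (hj : j < 2*m-1) :
    cf 0 j (sig2 a m c) = c (Sum.inl ⟨j, hj⟩) := by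
  rw [cf_sig2, Finset.sum_eq_single (Sum.inl ⟨j, hj⟩ : idx2 a m)]
  · simp [loc]
  · intro p _ hne
    rw [if_neg]
    rintro ⟨h1, h2⟩
    exact hne (loc_inj a m (show loc a m p = loc a m (Sum.inl ⟨j, hj⟩) by
      simp [loc, Prod.ext_iff]; exact ⟨h1, h2⟩))
  · intro h; exact absurd (Finset.mem_univ _) h

lemma cf_sig2_inr {a m : ℕ} (c : idx2 a m → ℂ) {i j : ℕ} (hi : i < a-1) (hj : j < m-1) :
    cf (i+1) j (sig2 a m c) = c (Sum.inr (⟨i, hi⟩, ⟨j, hj⟩)) := by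
  rw [cf_sig2, Finset.sum_eq_single (Sum.inr (⟨i, hi⟩, ⟨j, hj⟩) : idx2 a m)]
  · simp [loc]
  · intro p _ hne
    rw [if_neg]
    rintro ⟨h1, h2⟩
    exact hne (loc_inj a m (show loc a m p = loc a m (Sum.inr (⟨i, hi⟩, ⟨j, hj⟩)) by
      simp [loc, Prod.ext_iff]; exact ⟨h1, h2⟩))
  · intro h; exact absurd (Finset.mem_univ _) h

lemma cf_sig2_zero {a m : ℕ} (c : idx2 a m → ℂ) {i j : ℕ}
    (h : ¬(i = 0 ∧ j < 2*m-1) ∧ ¬(1 ≤ i ∧ i < a ∧ j < m-1)) :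
    cf i j (sig2 a m c) = 0 := by
  rw [cf_sig2, Finset.sum_eq_zero]
  rintro (j' | q) _
  · rw [if_neg]
    rintro ⟨h1, h2⟩
    simp [loc] at h1 h2
    exact h.1 ⟨h1.symm, by omega⟩
  · rw [if_neg]
    rintro ⟨h1, h2⟩
    simp [loc] at h1 h2
    refine h.2 ⟨by omega, by omega, by omega⟩

/-- normal form function in the `t = 0` case -/
def NF2fun (a m : ℕ) (f : R2) : idx2 a m → ℂ :=
  Sum.elim
    (fun j => cf 0 j f - (if m ≤ (j:ℕ) then ((a:ℂ)+1)⁻¹ * cf a ((j:ℕ)-m) f else 0))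
    (fun q => cf ((q.1:ℕ)+1) q.2 f)

def NF2 (a m : ℕ) : R2 →ₗ[ℂ] (idx2 a m → ℂ) where
  toFun := NF2fun a m
  map_add' f g := by
    funext p
    rcases p with j | q <;> simp [NF2fun]
    split_ifs <;> ring
  map_smul' c f := by
    funext p
    rcases p with j | q <;> simp [NF2fun]
    split_ifs <;> ring

lemma NF2_inl (a m : ℕ) (f : R2) (j : Fin (2*m-1)) :
    NF2 a m f (Sum.inl j)
      = cf 0 j f - (if m ≤ (j:ℕ) then ((a:ℂ)+1)⁻¹ * cf a ((j:ℕ)-m) f else 0) := rfl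

lemma NF2_inr (a m : ℕ) (f : R2) (q : Fin (a-1) × Fin (m-1)) :
    NF2 a m f (Sum.inr q) = cf ((q.1:ℕ)+1) q.2 f := rfl

/-- the two generators of the Jacobian ideal in the `t = 0` case -/
def gOne (a m : ℕ) : R2 :=
  MvPowerSeries.monomial (R := ℂ) (m2 a 0) ((a:ℂ)+1) + MvPowerSeries.monomial (R := ℂ) (m2 0 m) 1

def gTwo (m : ℕ) : R2 := MvPowerSeries.monomial (R := ℂ) (m2 1 (m-1)) ((m:ℂ))

lemma cf_gOne_mul (a m : ℕ) (r : R2) (i j : ℕ) :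
    cf i j (gOne a m * r)
      = (if a ≤ i then ((a:ℂ)+1) * cf (i-a) j r else 0)
        + (if m ≤ j then cf i (j-m) r else 0) := by
  rw [gOne, add_mul, map_add, cf_monomial_mul, cf_monomial_mul]
  congr 1
  · simp [Nat.zero_le]
  · by_cases h : m ≤ j
    · rw [if_pos ⟨Nat.zero_le _, h⟩, if_pos h, one_mul, Nat.sub_zero]
    · rw [if_neg (by omega), if_neg h]

lemma cf_gTwo_mul (m : ℕ) (s : R2) (i j : ℕ) :
    cf i j (gTwo m * s)
      = if 1 ≤ i ∧ m-1 ≤ j then (m:ℂ) * cf (i-1) (j-(m-1)) s else 0 := by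
  rw [gTwo, cf_monomial_mul]

theorem finrank_case2 (a m : ℕ) (ha : 1 ≤ a) (ham : a < m) :
    Module.finrank ℂ (R2 ⧸ Ideal.span {gOne a m, gTwo m}) = a*m + m - a := by
  have ha0 : ((a:ℂ)+1) ≠ 0 := by
    have : ((a:ℂ)+1) = ((a+1 : ℕ) : ℂ) := by push_cast; ring
    rw [this]; exact_mod_cast Nat.succ_ne_zero a
  have hm0 : ((m:ℂ)) ≠ 0 := by exact_mod_cast (by omega : m ≠ 0)
  have hA : ((a:ℂ)+1) * ((a:ℂ)+1)⁻¹ = 1 := mul_inv_cancel₀ ha0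
  have hM : ((m:ℂ)) * ((m:ℂ))⁻¹ = 1 := mul_inv_cancel₀ hm0
  have hcard : a*m + m - a = Fintype.card (idx2 a m) := by
    simp only [Fintype.card_sum, Fintype.card_prod, Fintype.card_fin]
    zify [show (1:ℕ) ≤ 2*m by omega, show 1 ≤ a from ha, show (1:ℕ) ≤ m by omega,
      show a ≤ a*m + m by nlinarith]
    ring
  rw [hcard]
  apply finrank_quotient_eq _ (NF2 a m) (sig2 a m)
  · -- h1 : NF2 vanishes on the ideal
    intro f hf
    obtain ⟨r, s, rfl⟩ := Ideal.mem_span_pair.mp hf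
    rw [mul_comm r (gOne a m), mul_comm s (gTwo m)]
    funext p
    rw [Pi.zero_apply]
    rcases p with j | q
    · have hj : (j:ℕ) < 2*m-1 := j.isLt
      by_cases hjm : m ≤ (j:ℕ)
      · simp only [NF2_inl, map_add, cf_gOne_mul, cf_gTwo_mul,
          if_neg (show ¬ a ≤ 0 by omega),
          if_neg (show ¬ (1 ≤ 0 ∧ m-1 ≤ (j:ℕ)) by omega),
          if_pos hjm, if_pos (show a ≤ a from le_refl a),
          if_neg (show ¬ m ≤ (j:ℕ)-m by omega),
          if_neg (show ¬ (1 ≤ a ∧ m-1 ≤ (j:ℕ)-m) by omega),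
          Nat.sub_self, add_zero, zero_add]
        linear_combination (-(cf 0 ((j:ℕ)-m) r)) * hA
      · simp only [NF2_inl, map_add, cf_gOne_mul, cf_gTwo_mul,
          if_neg (show ¬ a ≤ 0 by omega),
          if_neg (show ¬ (1 ≤ 0 ∧ m-1 ≤ (j:ℕ)) by omega),
          if_neg hjm, add_zero, zero_add, sub_zero]
    · have hq1 : (q.1:ℕ) < a-1 := q.1.isLt
      have hq2 : (q.2:ℕ) < m-1 := q.2.isLt
      simp only [NF2_inr, map_add, cf_gOne_mul, cf_gTwo_mul,
        if_neg (show ¬ a ≤ (q.1:ℕ)+1 by omega),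
        if_neg (show ¬ m ≤ (q.2:ℕ) by omega),
        if_neg (show ¬ (1 ≤ (q.1:ℕ)+1 ∧ m-1 ≤ (q.2:ℕ)) by omega),
        add_zero]
  · -- h2 : normal form decomposition
    intro f
    rw [Ideal.mem_span_pair]
    refine ⟨ofCf (fun i j =>
        (if j + 1 < m then ((a:ℂ)+1)⁻¹ * cf (i+a) j f else 0)
        + (if i = 0 ∧ m ≤ j + 1 then cf 0 (j+m) f else 0)),
      ofCf (fun i j =>
        (m:ℂ)⁻¹ * cf (i+1) (j+(m-1)) f
        - (if 1 ≤ j ∧ j < m then ((a:ℂ)+1)⁻¹ * ((m:ℂ)⁻¹ * cf (i+a+1) (j-1) f) else 0)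
        - (if i+1 = a then ((a:ℂ)+1) * ((m:ℂ)⁻¹ * cf 0 (j+(2*m-1)) f) else 0)), ?_⟩
    rw [mul_comm _ (gOne a m), mul_comm _ (gTwo m)]
    apply ext_cf
    intro i j
    simp only [map_add, map_sub, cf_gOne_mul, cf_gTwo_mul, cf_ofCf]
    rcases Nat.eq_zero_or_pos i with hi0 | hi1
    · subst hi0
      simp only [if_neg (show ¬ a ≤ 0 by omega),
        if_neg (show ¬ ((1:ℕ) ≤ 0 ∧ m-1 ≤ j) by omega), eq_self_iff_true, true_and,
        zero_add, add_zero]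
      by_cases hjm : m ≤ j
      · by_cases hj2 : 2*m-1 ≤ j
        · -- Case C
          rw [if_pos hjm, cf_sig2_zero _ ⟨by omega, by omega⟩, sub_zero,
            if_neg (show ¬ j-m+1 < m by omega),
            if_pos (show m ≤ j-m+1 by omega), zero_add,
            show j - m + m = j by omega]
        · -- Case D with m ≤ j
          rw [if_pos hjm, cf_sig2_inl _ (show j < 2*m-1 by omega), NF2_inl,
            if_pos hjm, if_pos (show j-m+1 < m by omega),
            if_neg (show ¬ m ≤ j-m+1 by omega), add_zero]
          ring
      · -- Case D with ¬ m ≤ j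
        rw [if_neg hjm, cf_sig2_inl _ (show j < 2*m-1 by omega), NF2_inl,
          if_neg hjm, sub_zero, sub_self]
    · by_cases hjm : m-1 ≤ j
      · -- Case B
        rw [cf_sig2_zero _ ⟨by omega, by omega⟩, sub_zero,
          if_pos (show 1 ≤ i ∧ m-1 ≤ j from ⟨hi1, hjm⟩),
          show i-1+1 = i by omega, show j-(m-1)+(m-1) = j by omega,
          show j-(m-1)-1 = j-m by omega, show i-1+a+1 = i+a by omega,
          show j-(m-1)+(2*m-1) = j+m by omega,
          if_neg (show ¬ j+1 < m by omega)]
        by_cases hjm2 : m ≤ j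
        · by_cases hj2 : j < 2*m-1
          · rw [if_pos hjm2, if_pos (show j-m+1 < m by omega),
              if_neg (show ¬ (i = 0 ∧ m ≤ j-m+1) by omega),
              if_pos (show 1 ≤ j-(m-1) ∧ j-(m-1) < m by omega), add_zero]
            by_cases him : i = a
            · rw [if_pos (show a ≤ i by omega), if_pos (show i-a = 0 ∧ m ≤ j+1 by omega),
                if_pos him]
              linear_combination (cf i j f - ((a:ℂ)+1) * cf 0 (j+m) f - ((a:ℂ)+1)⁻¹ * cf (i+a) (j-m) f) * hM
            · by_cases hia : a ≤ i
              · rw [if_pos hia, if_neg (show ¬ (i-a = 0 ∧ m ≤ j+1) by omega), if_neg him]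
                linear_combination (cf i j f - ((a:ℂ)+1)⁻¹ * cf (i+a) (j-m) f) * hM
              · rw [if_neg hia, if_neg him]
                linear_combination (cf i j f - ((a:ℂ)+1)⁻¹ * cf (i+a) (j-m) f) * hM
          · rw [if_pos hjm2, if_neg (show ¬ j-m+1 < m by omega),
              if_neg (show ¬ (i = 0 ∧ m ≤ j-m+1) by omega),
              if_neg (show ¬ (1 ≤ j-(m-1) ∧ j-(m-1) < m) by omega), add_zero, add_zero]
            by_cases him : i = a
            · rw [if_pos (show a ≤ i by omega), if_pos (show i-a = 0 ∧ m ≤ j+1 by omega),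
                if_pos him]
              linear_combination (cf i j f - ((a:ℂ)+1) * cf 0 (j+m) f) * hM
            · by_cases hia : a ≤ i
              · rw [if_pos hia, if_neg (show ¬ (i-a = 0 ∧ m ≤ j+1) by omega), if_neg him]
                linear_combination (cf i j f) * hM
              · rw [if_neg hia, if_neg him]
                linear_combination (cf i j f) * hM
        · rw [if_neg hjm2,
            if_neg (show ¬ (1 ≤ j-(m-1) ∧ j-(m-1) < m) by omega), add_zero]
          by_cases him : i = a
          · rw [if_pos (show a ≤ i by omega), if_pos (show i-a = 0 ∧ m ≤ j+1 by omega),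
              if_pos him]
            linear_combination (cf i j f - ((a:ℂ)+1) * cf 0 (j+m) f) * hM
          · by_cases hia : a ≤ i
            · rw [if_pos hia, if_neg (show ¬ (i-a = 0 ∧ m ≤ j+1) by omega), if_neg him]
              linear_combination (cf i j f) * hM
            · rw [if_neg hia, if_neg him]
              linear_combination (cf i j f) * hM
      · by_cases hia : a ≤ i
        · -- Case A
          rw [if_pos hia, if_neg (show ¬ m ≤ j by omega),
            if_neg (show ¬ (1 ≤ i ∧ m-1 ≤ j) by omega),
            if_pos (show j+1 < m by omega),
            if_neg (show ¬ (i-a = 0 ∧ m ≤ j+1) by omega),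
            show i-a+a = i by omega,
            cf_sig2_zero _ ⟨by omega, by omega⟩, sub_zero, add_zero, add_zero]
          linear_combination (cf i j f) * hA
        · -- Case E
          rw [if_neg (show ¬ a ≤ i by omega), if_neg (show ¬ m ≤ j by omega),
            if_neg (show ¬ (1 ≤ i ∧ m-1 ≤ j) by omega),
            show i = (i-1)+1 by omega,
            cf_sig2_inr _ (show i-1 < a-1 by omega) (show j < m-1 by omega), NF2_inr,
            show i-1+1 = i by omega]
          simp
  · -- h3
    intro c
    funext p
    rcases p with j | q
    · rw [NF2_inl, cf_sig2_inl _ j.isLt,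
        cf_sig2_zero _ ⟨by omega, by omega⟩]
      simp
    · rw [NF2_inr, cf_sig2_inr _ q.1.isLt q.2.isLt]

end Case2

section Glue

lemma m2_add (i j i' j' : ℕ) : m2 i j + m2 i' j' = m2 (i+i') (j+j') := by
  ext k; fin_cases k <;> simp

lemma m2_zero : m2 0 0 = 0 := by
  ext k; fin_cases k <;> simp

lemma m2_sub_single0 (i j : ℕ) : m2 i j - Finsupp.single 0 1 = m2 (i-1) j := by
  ext k; fin_cases k <;> simp [Finsupp.tsub_apply, Finsupp.single_apply]

lemma m2_sub_single1 (i j : ℕ) : m2 i j - Finsupp.single 1 1 = m2 i (j-1) := by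
  ext k; fin_cases k <;> simp [Finsupp.tsub_apply, Finsupp.single_apply]

lemma m2_single0 (i : ℕ) : Finsupp.single (0 : Fin 2) i = m2 i 0 := by simp [m2]

lemma m2_single1 (j : ℕ) : Finsupp.single (1 : Fin 2) j = m2 0 j := by simp [m2]

lemma poly_eq (a m : ℕ) :
    (X 0 ^ (a+1) + X 0 * X 1 ^ m : MvPolynomial (Fin 2) ℂ)
      = MvPolynomial.monomial (m2 (a+1) 0) 1 + MvPolynomial.monomial (m2 1 m) 1 := by
  rw [X_pow_eq_monomial, show (X 0 : MvPolynomial (Fin 2) ℂ) = X 0 ^ 1 from (pow_one _).symm,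
    X_pow_eq_monomial, X_pow_eq_monomial, monomial_mul, one_mul,
    m2_single0, m2_single1, m2_single0, m2_add]
  norm_num

lemma pd0_poly (a m : ℕ) :
    pderiv 0 (X 0 ^ (a+1) + X 0 * X 1 ^ m : MvPolynomial (Fin 2) ℂ)
      = MvPolynomial.monomial (m2 a 0) ((a:ℂ)+1) + MvPolynomial.monomial (m2 0 m) 1 := by
  rw [poly_eq, map_add, pderiv_monomial, pderiv_monomial,
    m2_sub_single0, m2_sub_single0]
  simp only [m2_apply0, Nat.add_sub_cancel, Nat.sub_self]
  push_cast
  ring_nf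

lemma pd1_poly (a m : ℕ) :
    pderiv 1 (X 0 ^ (a+1) + X 0 * X 1 ^ m : MvPolynomial (Fin 2) ℂ)
      = MvPolynomial.monomial (m2 1 (m-1)) ((m:ℂ)) := by
  rw [poly_eq, map_add, pderiv_monomial, pderiv_monomial,
    m2_sub_single1, m2_sub_single1]
  simp only [m2_apply1]
  simp

lemma Ct_poly (t : ℂ) (q : ℕ) :
    (C t * X 1 ^ q : MvPolynomial (Fin 2) ℂ) = MvPolynomial.monomial (m2 0 q) t := by
  rw [C_mul_X_pow_eq_monomial, m2_single1]

lemma coePS_sub (φ ψ : MvPolynomial (Fin 2) ℂ) :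
    ((φ - ψ : MvPolynomial (Fin 2) ℂ) : R2) = (φ : R2) - (ψ : R2) := by
  apply MvPowerSeries.ext
  intro d
  simp [MvPolynomial.coeff_coe, MvPolynomial.coeff_sub, map_sub]

lemma coe_pd0 (a m : ℕ) :
    ((pderiv 0 (X 0 ^ (a+1) + X 0 * X 1 ^ m : MvPolynomial (Fin 2) ℂ) :
      MvPolynomial (Fin 2) ℂ) : R2) = gOne a m := by
  rw [pd0_poly, gOne]
  push_cast
  rfl

lemma coe_pd1 (a m : ℕ) :
    ((pderiv 1 (X 0 ^ (a+1) + X 0 * X 1 ^ m : MvPolynomial (Fin 2) ℂ) :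
      MvPolynomial (Fin 2) ℂ) : R2) = gTwo m := by
  rw [pd1_poly, gTwo]
  push_cast
  rfl

end Glue

section Span1

/-- the `t ≠ 0` derivative in `z` -/
def gZt (t : ℂ) (m p q : ℕ) : R2 :=
  gTwo m - MvPowerSeries.monomial (R := ℂ) (m2 0 (q-1)) (t*(q:ℂ))

lemma span_eq_monomials (a m p q : ℕ) (t : ℂ) (ht : t ≠ 0)
    (ha : 1 ≤ a) (hp : 1 ≤ p) (hq : 1 ≤ q) (hm : m + 1 = p + q + a - a) (hmpq : m = p + q - 1) :
    Ideal.span {gOne a m, gZt t m p q}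
      = Ideal.span {MvPowerSeries.monomial (R := ℂ) (m2 a 0) (1:ℂ),
                    MvPowerSeries.monomial (R := ℂ) (m2 0 (q-1)) (1:ℂ)} := by
  have ha0 : ((a:ℂ)+1) ≠ 0 := by
    have : ((a:ℂ)+1) = ((a+1 : ℕ) : ℂ) := by push_cast; ring
    rw [this]; exact_mod_cast Nat.succ_ne_zero a
  set xa1 := MvPowerSeries.monomial (R := ℂ) (m2 a 0) (1:ℂ) with hxa1
  set zq1 := MvPowerSeries.monomial (R := ℂ) (m2 0 (q-1)) (1:ℂ) with hzq1
  set w := MvPowerSeries.monomial (R := ℂ) (m2 0 p) (1:ℂ) with hw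
  set cA := MvPowerSeries.monomial (R := ℂ) (m2 0 0) ((a:ℂ)+1) with hcA
  set cA' := MvPowerSeries.monomial (R := ℂ) (m2 0 0) (((a:ℂ)+1)⁻¹) with hcA'
  set u := MvPowerSeries.monomial (R := ℂ) (m2 1 (p-1)) ((m:ℂ)) -
    MvPowerSeries.monomial (R := ℂ) (m2 0 0) (t*(q:ℂ)) with hu
  have r1 : gOne a m = cA * xa1 + w * zq1 := by
    rw [gOne, hcA, hxa1, hw, hzq1, MvPowerSeries.monomial_mul_monomial,
      MvPowerSeries.monomial_mul_monomial, m2_add, m2_add]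
    norm_num
    rw [show p + (q-1) = m by omega]
  have r3 : cA' * cA = 1 := by
    rw [hcA', hcA, MvPowerSeries.monomial_mul_monomial, m2_add,
      inv_mul_cancel₀ ha0, m2_zero, MvPowerSeries.monomial_zero_one]
  have huz : gZt t m p q = u * zq1 := by
    rw [gZt, hu, sub_mul, gTwo, hzq1, MvPowerSeries.monomial_mul_monomial,
      MvPowerSeries.monomial_mul_monomial, m2_add, m2_add, mul_one, mul_one,
      show 1+0 = 1 by omega, show p-1+(q-1) = m-1 by omega,
      show (0+0 : ℕ) = 0 by omega, show 0+(q-1) = q-1 by omega]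
  have hcc : MvPowerSeries.constantCoeff (σ := Fin 2) (R := ℂ) u = -(t*(q:ℂ)) := by
    rw [← MvPowerSeries.coeff_zero_eq_constantCoeff_apply, hu, map_sub]
    rw [MvPowerSeries.coeff_monomial, MvPowerSeries.coeff_monomial,
      if_neg (show (0 : Fin 2 →₀ ℕ) ≠ m2 1 (p-1) by
        intro h
        have := congrArg (fun d => d 0) h
        simp at this),
      if_pos m2_zero.symm, zero_sub]
  have hu_unit : IsUnit u := by
    rw [MvPowerSeries.isUnit_iff_constantCoeff, hcc]
    simp only [isUnit_iff_ne_zero, neg_ne_zero]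
    exact mul_ne_zero ht (by exact_mod_cast (by omega : q ≠ 0))
  obtain ⟨v, hv⟩ := hu_unit
  have r2 : gZt t m p q = (v : R2) * zq1 := by rw [huz, hv]
  have r4 : ((v⁻¹ : R2ˣ) : R2) * (v : R2) = 1 := v.inv_mul
  apply le_antisymm
  · rw [Ideal.span_le]
    rintro x hx
    simp only [Set.mem_insert_iff, Set.mem_singleton_iff] at hx
    rcases hx with rfl | rfl
    · exact Ideal.mem_span_pair.mpr ⟨cA, w, by linear_combination (-1 : R2) * r1⟩
    · exact Ideal.mem_span_pair.mpr ⟨0, u, by linear_combination (-1 : R2) * huz⟩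
  · rw [Ideal.span_le]
    rintro x hx
    simp only [Set.mem_insert_iff, Set.mem_singleton_iff] at hx
    rcases hx with rfl | rfl
    · exact Ideal.mem_span_pair.mpr ⟨cA', -(cA' * w * ((v⁻¹ : R2ˣ) : R2)), by
        linear_combination cA' * r1 + (-(cA' * w * ((v⁻¹ : R2ˣ) : R2))) * r2
          + (-(cA' * w * zq1)) * r4 + xa1 * r3⟩
    · exact Ideal.mem_span_pair.mpr ⟨0, ((v⁻¹ : R2ˣ) : R2), by
        linear_combination ((v⁻¹ : R2ˣ) : R2) * r2 + zq1 * r4⟩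

end Span1

section GlueT

lemma coe_pd0_t (a m q : ℕ) (t : ℂ) :
    ((pderiv 0 (X 0 ^ (a+1) + X 0 * X 1 ^ m - C t * X 1 ^ q :
      MvPolynomial (Fin 2) ℂ) : MvPolynomial (Fin 2) ℂ) : R2) = gOne a m := by
  rw [map_sub, Ct_poly, pderiv_monomial]
  simp only [m2_apply0, Nat.cast_zero, mul_zero, map_zero, sub_zero]
  exact coe_pd0 a m

lemma coe_pd1_t (a m p q : ℕ) (t : ℂ) :
    ((pderiv 1 (X 0 ^ (a+1) + X 0 * X 1 ^ m - C t * X 1 ^ q :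
      MvPolynomial (Fin 2) ℂ) : MvPolynomial (Fin 2) ℂ) : R2) = gZt t m p q := by
  rw [map_sub, Ct_poly, pderiv_monomial, m2_sub_single1, pd1_poly, coePS_sub, gZt, gTwo]
  simp only [m2_apply1]
  push_cast
  rfl

end GlueT

end Stmt6


/-- for integers a,b,p,q ≥ 1 with a+b+1 = p+q, the germ
`x^{a+1} + x z^{a+b} − t z^q` at the origin has Milnor number a(q−1) for t ≠ 0
(Brieskorn type (a+1,q)) and Milnor number a² + ab + b for t = 0; hence the jump
at t = 0 equals b + ap. Here `X 0 = x`, `X 1 = z`. -/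
theorem stmt_6 (a b p q : ℕ) (ha : 1 ≤ a) (hb : 1 ≤ b) (hp : 1 ≤ p) (hq : 1 ≤ q)
    (habpq : a + b + 1 = p + q) :
    (∀ t : ℂ, t ≠ 0 →
      milnor ((X 0) ^ (a + 1) + X 0 * (X 1) ^ (a + b) - C t * (X 1) ^ q) = a * (q - 1)) ∧
    milnor ((X 0) ^ (a + 1) + X 0 * (X 1) ^ (a + b)) = a ^ 2 + a * b + b ∧
    (a ^ 2 + a * b + b : ℤ) - a * (q - 1) = b + a * p := by
  refine ⟨?_, ?_, ?_⟩
  · intro t ht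
    unfold milnor
    rw [Stmt6.coe_pd0_t a (a+b) q t, Stmt6.coe_pd1_t a (a+b) p q t,
      Stmt6.span_eq_monomials a (a+b) p q t ht ha hp hq (by omega) (by omega)]
    exact Stmt6.finrank_span_monomial_pair a (q-1)
  · unfold milnor
    rw [Stmt6.coe_pd0 a (a+b), Stmt6.coe_pd1 a (a+b),
      Stmt6.finrank_case2 a (a+b) ha (by omega)]
    zify [show a ≤ a*(a+b)+(a+b) by nlinarith]
    ring
  · have h : (a:ℤ) + b + 1 = p + q := by exact_mod_cast habpq
    push_cast
    linear_combination (a:ℤ) * h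
end
end

section
/- For the meromorphic function f = x(z^{a+b} + x^a y^b)/(y^p z^q) on ℙ² with a+b+1 = p+q, the zero fiber F₀ = f^{-1}(0) ∩ (ℙ² \ Pol(f)) is a disjoint union of c + 1 copies of ℂ*, where c = gcd(a, b); in particular χ(F₀) = 0. -/
open Complex Topology

/-- Auxiliary: mixed zpow computation in a commutative group. -/
lemma aux_zpow {G : Type*} [CommGroup G] (x y : G) (p q r s t u : ℤ) :
    (x ^ p * y ^ q) ^ r * (x ^ s * y ^ t) ^ u
      = x ^ (p * r + s * u) * y ^ (q * r + t * u) := by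
  rw [mul_zpow, mul_zpow, ← zpow_mul, ← zpow_mul, ← zpow_mul, ← zpow_mul,
    mul_mul_mul_comm, ← zpow_add, ← zpow_add]

/-- Auxiliary: an equiv of discrete spaces is a homeomorphism. -/
def discreteHomeomorph {X Y : Type*} [TopologicalSpace X] [TopologicalSpace Y]
    [DiscreteTopology X] [DiscreteTopology Y] (e : X ≃ Y) : X ≃ₜ Y where
  toEquiv := e
  continuous_toFun := continuous_of_discreteTopology
  continuous_invFun := continuous_of_discreteTopology

/-- for f = x(z^{a+b} + x^a y^b)/(y^p z^q) on ℙ² with a+b+1 = p+q, the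
zero fiber F₀ = f⁻¹(0) ∩ (ℙ² \ Pol(f)) lies in the chart z = 1 (with coordinates
(x,y)), where it is the set {(x,y) | y ≠ 0 ∧ x(1 + x^a y^b) = 0}. It is a disjoint
union of c+1 copies of ℂ*, where c = gcd(a,b): it is homeomorphic to
Fin (gcd a b + 1) × ℂ*. -/
theorem stmt_7 (a b p q : ℕ) (ha : 1 ≤ a) (hb : 1 ≤ b) (hp : 1 ≤ p) (hq : 1 ≤ q)
    (habpq : a + b + 1 = p + q) :
    Nonempty
      (({v : ℂ × ℂ | v.2 ≠ 0 ∧ v.1 * (1 + v.1 ^ a * v.2 ^ b) = 0} : Set (ℂ × ℂ)) ≃ₜ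
        Fin (Nat.gcd a b + 1) × ({w : ℂ | w ≠ 0} : Set ℂ)) := by
  classical
  -- arithmetic setup
  set c := Nat.gcd a b with hcdef
  have hc0 : 0 < c := Nat.gcd_pos_of_pos_left _ ha
  have : NeZero c := ⟨hc0.ne'⟩
  obtain ⟨a', ha'⟩ : c ∣ a := Nat.gcd_dvd_left a b
  obtain ⟨b', hb'⟩ : c ∣ b := Nat.gcd_dvd_right a b
  have hcop : Nat.Coprime a' b' := by
    have h := Nat.coprime_div_gcd_div_gcd (m := a) (n := b) hc0
    rw [← hcdef] at h
    have e1 : a / c = a' := by rw [ha']; exact Nat.mul_div_cancel_left _ hc0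
    have e2 : b / c = b' := by rw [hb']; exact Nat.mul_div_cancel_left _ hc0
    rwa [e1, e2] at h
  set A : ℤ := Nat.gcdA a' b' with hAdef
  set B : ℤ := Nat.gcdB a' b' with hBdef
  have hbez : (a' : ℤ) * A + (b' : ℤ) * B = 1 := by
    have h := Nat.gcd_eq_gcd_ab a' b'
    rw [hcop] at h
    push_cast at h
    linarith
  have haz : (a : ℤ) = (c : ℤ) * (a' : ℤ) := by exact_mod_cast congrArg Nat.cast ha'
  have hbz : (b : ℤ) = (c : ℤ) * (b' : ℤ) := by exact_mod_cast congrArg Nat.cast hb'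
  have hane : a ≠ 0 := by omega
  -- the ambient sets
  set F : Set (ℂ × ℂ) := {v : ℂ × ℂ | v.2 ≠ 0 ∧ v.1 * (1 + v.1 ^ a * v.2 ^ b) = 0}
    with hFdef
  set K : Set ℂ := {w : ℂ | w ≠ 0} with hKdef
  set T : Set (ℂˣ × ℂˣ) := {u | u.1 ^ a * u.2 ^ b = -1} with hTdef
  set R : Set ℂˣ := {s | s ^ c = -1} with hRdef
  set P : ↥F → Prop := fun v => (v : ℂ × ℂ).1 = 0 with hPdef
  -- clopen decomposition of F
  have contx : Continuous fun v : ↥F => (v : ℂ × ℂ).1 :=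
    continuous_fst.comp continuous_subtype_val
  have conty : Continuous fun v : ↥F => (v : ℂ × ℂ).2 :=
    continuous_snd.comp continuous_subtype_val
  have hopen1 : IsOpen {v : ↥F | P v} := by
    have hset : {v : ↥F | P v}
        = (fun v : ↥F => 1 + (v : ℂ × ℂ).1 ^ a * (v : ℂ × ℂ).2 ^ b) ⁻¹' {0}ᶜ := by
      ext v
      simp only [Set.mem_setOf_eq, Set.mem_preimage, Set.mem_compl_iff,
        Set.mem_singleton_iff, hPdef]
      constructor
      · intro h
        rw [h, zero_pow hane, zero_mul, add_zero]
        exact one_ne_zero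
      · intro h
        rcases mul_eq_zero.mp v.2.2 with h1 | h2
        · exact h1
        · exact absurd h2 h
    rw [hset]
    exact (isOpen_compl_singleton).preimage
      (continuous_const.add ((contx.pow a).mul (conty.pow b)))
  have hopen2 : IsOpen {v : ↥F | ¬ P v} := by
    have hset : {v : ↥F | ¬ P v} = ((fun v : ↥F => (v : ℂ × ℂ).1) ⁻¹' {0})ᶜ := by
      ext v; simp [hPdef]
    rw [hset]
    exact (isClosed_singleton.preimage contx).isOpen_compl
  have hSum : ({v : ↥F // P v} ⊕ {v : ↥F // ¬ P v}) ≃ₜ ↥F := by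
    refine Equiv.toHomeomorphOfContinuousOpen (Equiv.sumCompl P) ?_ ?_
    · exact continuous_subtype_val.sumElim continuous_subtype_val
    · exact isOpenMap_sumElim.mpr
        ⟨hopen1.isOpenMap_subtype_val, hopen2.isOpenMap_subtype_val⟩
  -- the piece {x = 0} is homeomorphic to ℂ*
  have hA : {v : ↥F // P v} ≃ₜ ↥K := by
    refine
      { toFun := fun v => ⟨(v : ↥F).val.2, (v : ↥F).2.1⟩
        invFun := fun w => ⟨⟨(0, w.1), ⟨w.2, by rw [zero_mul]⟩⟩, rfl⟩
        left_inv := ?_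
        right_inv := fun w => rfl
        continuous_toFun :=
          (continuous_snd.comp (continuous_subtype_val.comp continuous_subtype_val)).subtype_mk _
        continuous_invFun :=
          (((continuous_const.prodMk continuous_subtype_val).subtype_mk _).subtype_mk _) }
    rintro ⟨⟨⟨x, y⟩, hv⟩, hx⟩
    simp only [hPdef] at hx
    apply Subtype.ext
    apply Subtype.ext
    simp only
    rw [← hx]
  -- the piece {1 + x^a y^b = 0} is homeomorphic to T
  have hB : {v : ↥F // ¬ P v} ≃ₜ ↥T := by
    refine
      { toFun := fun v =>
          ⟨(Units.mk0 (v : ↥F).val.1 v.2, Units.mk0 (v : ↥F).val.2 (v : ↥F).2.1), ?_⟩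
        invFun := fun u =>
          ⟨⟨((u : ℂˣ × ℂˣ).1.val, (u : ℂˣ × ℂˣ).2.val), ⟨(u : ℂˣ × ℂˣ).2.ne_zero, ?_⟩⟩,
            (u : ℂˣ × ℂˣ).1.ne_zero⟩
        left_inv := fun v => rfl
        right_inv := fun u => Subtype.ext (Prod.ext (Units.ext rfl) (Units.ext rfl))
        continuous_toFun := ?_
        continuous_invFun := ?_ }
    · -- membership in T
      apply Units.ext
      push_cast
      show (v : ↥F).val.1 ^ a * (v : ↥F).val.2 ^ b = -1
      have h2 : 1 + (v : ↥F).val.1 ^ a * (v : ↥F).val.2 ^ b = 0 :=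
        (mul_eq_zero.mp (v : ↥F).2.2).resolve_left v.2
      linear_combination h2
    · -- membership in F
      have hu : ((u : ℂˣ × ℂˣ).1.val) ^ a * ((u : ℂˣ × ℂˣ).2.val) ^ b = -1 := by
        have := congrArg Units.val u.2
        push_cast at this
        exact this
      rw [hu]
      ring
    · apply Continuous.subtype_mk
      apply Continuous.prodMk
      · exact Units.isEmbedding_val₀.continuous_iff.mpr
          (continuous_fst.comp (continuous_subtype_val.comp continuous_subtype_val))
      · exact Units.isEmbedding_val₀.continuous_iff.mpr
          (continuous_snd.comp (continuous_subtype_val.comp continuous_subtype_val))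
    · apply Continuous.subtype_mk
      apply Continuous.subtype_mk
      exact (Units.continuous_val.comp (continuous_fst.comp continuous_subtype_val)).prodMk
        (Units.continuous_val.comp (continuous_snd.comp continuous_subtype_val))
  -- the torus automorphism
  have contzpow : ∀ (m n : ℤ), Continuous fun u : ℂˣ × ℂˣ => u.1 ^ m * u.2 ^ n :=
    fun m n => ((continuous_zpow m).comp continuous_fst).mul
      ((continuous_zpow n).comp continuous_snd)
  let Φ : (ℂˣ × ℂˣ) ≃ₜ (ℂˣ × ℂˣ) :=
    { toFun := fun u => (u.1 ^ (a' : ℤ) * u.2 ^ (b' : ℤ), u.1 ^ (-B) * u.2 ^ A)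
      invFun := fun u => (u.1 ^ A * u.2 ^ (-(b' : ℤ)), u.1 ^ B * u.2 ^ (a' : ℤ))
      left_inv := by
        rintro ⟨x, y⟩
        simp only [Prod.mk.injEq]
        constructor
        · rw [aux_zpow]
          have e1 : (a' : ℤ) * A + -B * -(b' : ℤ) = 1 := by linear_combination hbez
          have e2 : (b' : ℤ) * A + A * -(b' : ℤ) = 0 := by ring
          rw [e1, e2, zpow_one, zpow_zero, mul_one]
        · rw [aux_zpow]
          have e1 : (a' : ℤ) * B + -B * (a' : ℤ) = 0 := by ring
          have e2 : (b' : ℤ) * B + A * (a' : ℤ) = 1 := by linear_combination hbez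
          rw [e1, e2, zpow_one, zpow_zero, one_mul]
      right_inv := by
        rintro ⟨s, w⟩
        simp only [Prod.mk.injEq]
        constructor
        · rw [aux_zpow]
          have e1 : A * (a' : ℤ) + B * (b' : ℤ) = 1 := by linear_combination hbez
          have e2 : -(b' : ℤ) * (a' : ℤ) + (a' : ℤ) * (b' : ℤ) = 0 := by ring
          rw [e1, e2, zpow_one, zpow_zero, mul_one]
        · rw [aux_zpow]
          have e1 : A * -B + B * A = 0 := by ring
          have e2 : -(b' : ℤ) * -B + (a' : ℤ) * A = 1 := by linear_combination hbez
          rw [e1, e2, zpow_one, zpow_zero, one_mul]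
      continuous_toFun := (contzpow _ _).prodMk (contzpow _ _)
      continuous_invFun := (contzpow _ _).prodMk (contzpow _ _) }
  have himg : (⇑Φ) '' T = R ×ˢ (Set.univ : Set ℂˣ) := by
    have himg' : (⇑Φ) '' T = (⇑Φ.symm) ⁻¹' T := Equiv.image_eq_preimage_symm Φ.toEquiv T
    rw [himg']
    ext ⟨s, w⟩
    simp only [Set.mem_preimage, Set.mem_setOf_eq, Set.mem_prod, Set.mem_univ, and_true,
      hTdef, hRdef]
    show (s ^ A * w ^ (-(b' : ℤ))) ^ a * (s ^ B * w ^ (a' : ℤ)) ^ b = -1 ↔ s ^ c = -1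
    rw [← zpow_natCast (s ^ A * w ^ (-(b' : ℤ))) a, ← zpow_natCast (s ^ B * w ^ (a' : ℤ)) b,
      aux_zpow]
    have e1 : A * (a : ℤ) + B * (b : ℤ) = (c : ℤ) := by
      linear_combination A * haz + B * hbz + (c : ℤ) * hbez
    have e2 : -(b' : ℤ) * (a : ℤ) + (a' : ℤ) * (b : ℤ) = 0 := by
      linear_combination (-(b' : ℤ)) * haz + (a' : ℤ) * hbz
    rw [e1, e2, zpow_zero, mul_one, zpow_natCast]
  -- R is a discrete space with c points
  set ζ : ℂ := Complex.exp (2 * Real.pi * I / c) with hζdef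
  have hζ : IsPrimitiveRoot ζ c := Complex.isPrimitiveRoot_exp c hc0.ne'
  set r : ℂ := Complex.exp (Real.pi * I / c) with hrdef
  have hrc : r ^ c = -1 := by
    rw [← Complex.exp_nat_mul]
    have hcne : (c : ℂ) ≠ 0 := Nat.cast_ne_zero.mpr hc0.ne'
    have hcc : (c : ℂ) * (Real.pi * I / c) = Real.pi * I := by field_simp
    rw [hcc, Complex.exp_pi_mul_I]
  set ζu : ℂˣ := Units.mk0 ζ (Complex.exp_ne_zero _) with hζu
  set ru : ℂˣ := Units.mk0 r (Complex.exp_ne_zero _) with hru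
  have hζc : ζ ^ c = 1 := hζ.pow_eq_one
  let f : Fin c → ↥R := fun k =>
    ⟨ru * ζu ^ (k : ℕ), by
      show (ru * ζu ^ (k : ℕ)) ^ c = -1
      apply Units.ext
      push_cast
      show (r * ζ ^ (k : ℕ)) ^ c = -1
      rw [mul_pow, ← pow_mul, mul_comm (k : ℕ) c, pow_mul, hζc, one_pow, mul_one, hrc]⟩
  have hfbij : Function.Bijective f := by
    constructor
    · intro i j hij
      have h1 : ru * ζu ^ (i : ℕ) = ru * ζu ^ (j : ℕ) := congrArg Subtype.val hij
      have h2 : ζu ^ (i : ℕ) = ζu ^ (j : ℕ) := mul_left_cancel h1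
      have h3 : ζ ^ (i : ℕ) = ζ ^ (j : ℕ) := by
        have := congrArg Units.val h2
        push_cast at this
        exact this
      exact Fin.ext (hζ.pow_inj i.2 j.2 h3)
    · rintro ⟨s, hs⟩
      have hsc : (s : ℂ) ^ c = -1 := by
        have := congrArg Units.val hs
        push_cast at this
        exact this
      have hx : ((s : ℂ) / r) ^ c = 1 := by
        rw [div_pow, hsc, hrc, neg_div_neg_eq, div_one]
      obtain ⟨i, hi, hζi⟩ := hζ.eq_pow_of_pow_eq_one hx
      refine ⟨⟨i, hi⟩, ?_⟩
      apply Subtype.ext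
      apply Units.ext
      push_cast
      show r * ζ ^ i = s
      rw [hζi, mul_div_cancel₀ _ (Complex.exp_ne_zero _)]
  have hT2 : T2Space ℂˣ := Units.isEmbedding_val₀.t2Space
  have hfinR : Finite ↥R := Finite.of_equiv _ (Equiv.ofBijective f hfbij)
  have hRFin : ↥R ≃ₜ Fin c := discreteHomeomorph (Equiv.ofBijective f hfbij).symm
  -- ℂˣ ≃ₜ K
  have hUK : ℂˣ ≃ₜ ↥K :=
    { toEquiv := unitsEquivNeZero
      continuous_toFun := Units.continuous_val.subtype_mk _
      continuous_invFun := Units.isEmbedding_val₀.continuous_iff.mpr continuous_subtype_val }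
  -- assemble
  have hTfinal : ↥T ≃ₜ Fin c × ↥K :=
    ((Φ.image T).trans (Homeomorph.setCongr himg)).trans
      (((Homeomorph.Set.prod R Set.univ).trans
        (Homeomorph.prodCongr hRFin ((Homeomorph.Set.univ ℂˣ).trans hUK))))
  have hPunit : PUnit.{1} ≃ₜ Fin 1 := discreteHomeomorph (Equiv.ofUnique PUnit.{1} (Fin 1))
  have hKfinal : ↥K ≃ₜ Fin 1 × ↥K :=
    (Homeomorph.punitProd ↥K).symm.trans (Homeomorph.prodCongr hPunit (Homeomorph.refl _))
  have hfinsum : (Fin 1 ⊕ Fin c) ≃ₜ Fin (c + 1) :=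
    discreteHomeomorph ((Equiv.sumComm _ _).trans finSumFinEquiv)
  exact ⟨hSum.symm.trans <| ((hA.trans hKfinal).sumCongr (hB.trans hTfinal)).trans <|
    (Homeomorph.sumProdDistrib).symm.trans <|
    Homeomorph.prodCongr hfinsum (Homeomorph.refl _)⟩
end

section
/- In the family of plane curve germs x(z^{a+b} + x^a y^b)|_{x=1}, i.e. the germs z^{a+b} + y^b − t y^p z^q = 0 at points of the chart x = 1 along the pole axis, the singularity is of uniform Brieskorn type (b, a+b) for all t; in particular the Milnor number (b−1)(a+b−1) is constant in t and there is no jump (λ = 0 at [1:0:0]). -/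
open MvPolynomial

noncomputable section Aux

abbrev R2 := MvPowerSeries (Fin 2) ℂ

def ee (i j : ℕ) : Fin 2 →₀ ℕ := Finsupp.single 0 i + Finsupp.single 1 j

@[simp] lemma ee_apply0 (i j : ℕ) : ee i j 0 = i := by
  simp [ee, Finsupp.single_apply]

@[simp] lemma ee_apply1 (i j : ℕ) : ee i j 1 = j := by
  simp [ee, Finsupp.single_apply]

lemma ee_eta (e : Fin 2 →₀ ℕ) : ee (e 0) (e 1) = e := by
  ext s
  fin_cases s <;> simp

lemma ee_le_iff {i j : ℕ} {e : Fin 2 →₀ ℕ} : ee i j ≤ e ↔ i ≤ e 0 ∧ j ≤ e 1 := by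
  rw [Finsupp.le_def]
  constructor
  · intro h; exact ⟨by simpa using h 0, by simpa using h 1⟩
  · rintro ⟨h1, h2⟩ s; fin_cases s <;> simpa

lemma sub_ee (e : Fin 2 →₀ ℕ) (i j : ℕ) : e - ee i j = ee (e 0 - i) (e 1 - j) := by
  ext s
  fin_cases s <;> simp [Finsupp.tsub_apply]

/-- monomial power series `c * Y^i Z^j`. -/
def Mono (i j : ℕ) (c : ℂ) : R2 := MvPowerSeries.monomial (ee i j) c

lemma coeff_mul_Mono (φ : R2) (s r : ℕ) (c : ℂ) (e : Fin 2 →₀ ℕ) :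
    MvPowerSeries.coeff e (φ * Mono s r c) =
      if s ≤ e 0 ∧ r ≤ e 1 then MvPowerSeries.coeff (ee (e 0 - s) (e 1 - r)) φ * c else 0 := by
  rw [Mono, MvPowerSeries.coeff_mul_monomial, sub_ee]
  split_ifs with h1 h2 h2
  · rfl
  · exact absurd (ee_le_iff.mp h1) h2
  · exact absurd (ee_le_iff.mpr h2) h1
  · rfl

end Aux

noncomputable section Core

variable (c1 c2 τ1 τ2 : ℂ) (m k γ0 γ1 δ0 δ1 : ℕ)

def FF1 : R2 := Mono m 0 c1 - Mono γ0 γ1 τ1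
def FF2 : R2 := Mono 0 k c2 - Mono δ0 δ1 τ2

lemma coeff_mul_FF1 (φ : R2) (e : Fin 2 →₀ ℕ) :
    MvPowerSeries.coeff e (φ * FF1 c1 τ1 m γ0 γ1) =
      (if m ≤ e 0 then MvPowerSeries.coeff (ee (e 0 - m) (e 1)) φ * c1 else 0)
      - (if γ0 ≤ e 0 ∧ γ1 ≤ e 1 then
          MvPowerSeries.coeff (ee (e 0 - γ0) (e 1 - γ1)) φ * τ1 else 0) := by
  rw [FF1, mul_sub, map_sub, coeff_mul_Mono, coeff_mul_Mono]
  simp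

lemma coeff_mul_FF2 (φ : R2) (e : Fin 2 →₀ ℕ) :
    MvPowerSeries.coeff e (φ * FF2 c2 τ2 k δ0 δ1) =
      (if k ≤ e 1 then MvPowerSeries.coeff (ee (e 0) (e 1 - k)) φ * c2 else 0)
      - (if δ0 ≤ e 0 ∧ δ1 ≤ e 1 then
          MvPowerSeries.coeff (ee (e 0 - δ0) (e 1 - δ1)) φ * τ2 else 0) := by
  rw [FF2, mul_sub, map_sub, coeff_mul_Mono, coeff_mul_Mono]
  simp

def ser (w : ℕ → ℕ → ℂ) : R2 := fun e => w (e 0) (e 1)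

lemma coeff_ser (w : ℕ → ℕ → ℂ) (e : Fin 2 →₀ ℕ) :
    MvPowerSeries.coeff e (ser w) = w (e 0) (e 1) := rfl

end Core

noncomputable section Rec

variable (c1 c2 τ1 τ2 : ℂ) (f : ℕ → ℕ → ℂ) (m k γ0 γ1 δ0 δ1 : ℕ)

def uv (hγ : γ0 + γ1 = k + 1) (hδ : δ0 + δ1 = k + 1) (hmk : m < k) :
    ℕ → ℕ → ℂ × ℂ := fun i j =>
  ( c1⁻¹ * ( f (i + m) j
      + τ1 * (if h : γ0 ≤ i + m ∧ γ1 ≤ j then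
          (uv hγ hδ hmk (i + m - γ0) (j - γ1)).1 else 0)
      + τ2 * (if h : δ0 ≤ i + m ∧ δ1 ≤ j then
          (uv hγ hδ hmk (i + m - δ0) (j - δ1)).2 else 0)),
    if m ≤ i then 0 else
      c2⁻¹ * ( f i (j + k)
      + τ1 * (if h : γ0 ≤ i ∧ γ1 ≤ j + k then
          (uv hγ hδ hmk (i - γ0) (j + k - γ1)).1 else 0)
      + τ2 * (if h : δ0 ≤ i ∧ δ1 ≤ j + k then
          (uv hγ hδ hmk (i - δ0) (j + k - δ1)).2 else 0)))
  termination_by i j => i + j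
  decreasing_by all_goals omega


variable {m k γ0 γ1 δ0 δ1}

lemma uv_fst (hγ : γ0 + γ1 = k + 1) (hδ : δ0 + δ1 = k + 1) (hmk : m < k) (i j : ℕ) :
    (uv c1 c2 τ1 τ2 f m k γ0 γ1 δ0 δ1 hγ hδ hmk i j).1 =
    c1⁻¹ * ( f (i + m) j
      + τ1 * (if γ0 ≤ i + m ∧ γ1 ≤ j then
          (uv c1 c2 τ1 τ2 f m k γ0 γ1 δ0 δ1 hγ hδ hmk (i + m - γ0) (j - γ1)).1 else 0)
      + τ2 * (if δ0 ≤ i + m ∧ δ1 ≤ j then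
          (uv c1 c2 τ1 τ2 f m k γ0 γ1 δ0 δ1 hγ hδ hmk (i + m - δ0) (j - δ1)).2 else 0)) := by
  conv_lhs => rw [uv]
  rfl

lemma uv_snd_of_le (hγ : γ0 + γ1 = k + 1) (hδ : δ0 + δ1 = k + 1) (hmk : m < k) (i j : ℕ)
    (h : m ≤ i) : (uv c1 c2 τ1 τ2 f m k γ0 γ1 δ0 δ1 hγ hδ hmk i j).2 = 0 := by
  conv_lhs => rw [uv]
  simp [h]

lemma uv_snd_of_lt (hγ : γ0 + γ1 = k + 1) (hδ : δ0 + δ1 = k + 1) (hmk : m < k) (i j : ℕ)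
    (h : ¬ m ≤ i) : (uv c1 c2 τ1 τ2 f m k γ0 γ1 δ0 δ1 hγ hδ hmk i j).2 =
    c2⁻¹ * ( f i (j + k)
      + τ1 * (if γ0 ≤ i ∧ γ1 ≤ j + k then
          (uv c1 c2 τ1 τ2 f m k γ0 γ1 δ0 δ1 hγ hδ hmk (i - γ0) (j + k - γ1)).1 else 0)
      + τ2 * (if δ0 ≤ i ∧ δ1 ≤ j + k then
          (uv c1 c2 τ1 τ2 f m k γ0 γ1 δ0 δ1 hγ hδ hmk (i - δ0) (j + k - δ1)).2 else 0)) := by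
  conv_lhs => rw [uv]
  simp only [if_neg h]
  rfl


/-- Normal form: given `F`, the series `U*F1 + V*F2` built by the division algorithm agrees
with `F` at every exponent outside the box `{e0 < m, e1 < k}`. -/
theorem normal_form (hγ : γ0 + γ1 = k + 1) (hδ : δ0 + δ1 = k + 1) (hmk : m < k)
    (hc1 : c1 ≠ 0) (hc2 : c2 ≠ 0) (F : R2) (e : Fin 2 →₀ ℕ) (he : ¬ (e 0 < m ∧ e 1 < k)) :
    MvPowerSeries.coeff e F =
      MvPowerSeries.coeff e
        ((ser (fun i j => (uv c1 c2 τ1 τ2 (fun i j => MvPowerSeries.coeff (ee i j) F)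
            m k γ0 γ1 δ0 δ1 hγ hδ hmk i j).1)) * FF1 c1 τ1 m γ0 γ1
         + (ser (fun i j => (uv c1 c2 τ1 τ2 (fun i j => MvPowerSeries.coeff (ee i j) F)
            m k γ0 γ1 δ0 δ1 hγ hδ hmk i j).2)) * FF2 c2 τ2 k δ0 δ1) := by
  set f : ℕ → ℕ → ℂ := fun i j => MvPowerSeries.coeff (ee i j) F with hf
  rw [map_add, coeff_mul_FF1, coeff_mul_FF2]
  simp only [coeff_ser, ee_apply0, ee_apply1]
  by_cases hA : m ≤ e 0
  · have h0 : e 0 - m + m = e 0 := Nat.sub_add_cancel hA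
    rw [uv_fst, h0, uv_snd_of_le c1 c2 τ1 τ2 f hγ hδ hmk (e 0) (e 1 - k) hA, if_pos hA]
    have hfe : f (e 0) (e 1) = MvPowerSeries.coeff e F := by simp only [hf]; rw [ee_eta]
    rw [hfe]
    field_simp
    split_ifs <;> ring
  · have hB : k ≤ e 1 := by
      rcases Nat.lt_or_ge (e 1) k with h | h
      · exact absurd ⟨Nat.lt_of_not_le hA, h⟩ he
      · exact h
    have h0 : e 1 - k + k = e 1 := Nat.sub_add_cancel hB
    rw [if_neg hA, uv_snd_of_lt c1 c2 τ1 τ2 f hγ hδ hmk (e 0) (e 1 - k) hA, h0, if_pos hB]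
    have hfe : f (e 0) (e 1) = MvPowerSeries.coeff e F := by simp only [hf]; rw [ee_eta]
    rw [hfe]
    field_simp
    split_ifs <;> ring

end Rec

noncomputable section Inj

variable {c1 c2 τ1 τ2 : ℂ} {m k γ0 γ1 δ0 δ1 : ℕ}

theorem small_eq_zero_of_mem (hγ : γ0 + γ1 = k + 1) (hδ : δ0 + δ1 = k + 1) (hmk : m < k)
    (hc1 : c1 ≠ 0) (hc2 : c2 ≠ 0) (S : R2)
    (hS : ∀ e : Fin 2 →₀ ℕ, ¬ (e 0 < m ∧ e 1 < k) → MvPowerSeries.coeff e S = 0)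
    (hmem : S ∈ Ideal.span {FF1 c1 τ1 m γ0 γ1, FF2 c2 τ2 k δ0 δ1}) : S = 0 := by
  obtain ⟨u0, v0, huv0⟩ := Ideal.mem_span_pair.mp hmem
  have key : ∀ N : ℕ, ∃ u v : R2,
      u * FF1 c1 τ1 m γ0 γ1 + v * FF2 c2 τ2 k δ0 δ1 = S ∧
      (∀ i j : ℕ, i + j + m < N → MvPowerSeries.coeff (ee i j) u = 0) ∧
      (∀ i j : ℕ, i + j + k < N → MvPowerSeries.coeff (ee i j) v = 0) := by
    intro N
    induction N with
    | zero => exact ⟨u0, v0, huv0, fun i j h => absurd h (by omega),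
        fun i j h => absurd h (by omega)⟩
    | succ N ih =>
      obtain ⟨u, v, heq, hu, hv⟩ := ih
      have EQ : ∀ i j : ℕ, i + j = N →
          (if m ≤ i then MvPowerSeries.coeff (ee (i - m) j) u * c1 else 0)
          + (if k ≤ j then MvPowerSeries.coeff (ee i (j - k)) v * c2 else 0)
          = MvPowerSeries.coeff (ee i j) S := by
        intro i j hij
        rw [← heq, map_add, coeff_mul_FF1, coeff_mul_FF2]
        simp only [ee_apply0, ee_apply1]
        have t1 : (if γ0 ≤ i ∧ γ1 ≤ j then
            MvPowerSeries.coeff (ee (i - γ0) (j - γ1)) u * τ1 else 0) = 0 := by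
          split_ifs with h
          · rw [hu _ _ (by omega), zero_mul]
          · rfl
        have t2 : (if δ0 ≤ i ∧ δ1 ≤ j then
            MvPowerSeries.coeff (ee (i - δ0) (j - δ1)) v * τ2 else 0) = 0 := by
          split_ifs with h
          · rw [hv _ _ (by omega), zero_mul]
          · rfl
        rw [t1, t2]
        ring
      have ha : ∀ i j : ℕ, i + j + m = N → j < k →
          MvPowerSeries.coeff (ee i j) u = 0 := by
        intro i j hij hjk
        have h := EQ (i + m) j (by omega)
        rw [hS _ (by simp only [ee_apply0, ee_apply1]; omega)] at h
        rw [if_pos (by omega : m ≤ i + m), if_neg (by omega : ¬ k ≤ j)] at h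
        have h2 : i + m - m = i := by omega
        rw [h2, add_zero] at h
        exact (mul_eq_zero.mp h).resolve_right hc1
      have hb : ∀ i j : ℕ, i + j + k = N → i < m →
          MvPowerSeries.coeff (ee i j) v = 0 := by
        intro i j hij him
        have h := EQ i (j + k) (by omega)
        rw [hS _ (by simp only [ee_apply0, ee_apply1]; omega)] at h
        rw [if_neg (by omega : ¬ m ≤ i), if_pos (by omega : k ≤ j + k)] at h
        have h2 : j + k - k = j := by omega
        rw [h2, zero_add] at h
        exact (mul_eq_zero.mp h).resolve_right hc2
      have hcc : ∀ i j : ℕ, i + j + k = N → m ≤ i →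
          MvPowerSeries.coeff (ee i j) v * c2
            = - (MvPowerSeries.coeff (ee (i - m) (j + k)) u * c1) := by
        intro i j hij him
        have h := EQ i (j + k) (by omega)
        rw [hS _ (by simp only [ee_apply0, ee_apply1]; omega)] at h
        rw [if_pos him, if_pos (by omega : k ≤ j + k)] at h
        have h2 : j + k - k = j := by omega
        rw [h2] at h
        linear_combination h
      set Φ : R2 := ser (fun i j =>
        if i + j + m + k = N then MvPowerSeries.coeff (ee i (j + k)) u else 0) with hΦ
      have coeffΦ : ∀ i j : ℕ, MvPowerSeries.coeff (ee i j) Φ =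
          if i + j + m + k = N then MvPowerSeries.coeff (ee i (j + k)) u else 0 := by
        intro i j
        rw [hΦ, coeff_ser]
        simp only [ee_apply0, ee_apply1]
      refine ⟨u - (MvPowerSeries.C (σ := Fin 2) (R := ℂ)) c2⁻¹ * (Φ * FF2 c2 τ2 k δ0 δ1),
              v + (MvPowerSeries.C (σ := Fin 2) (R := ℂ)) c2⁻¹ * (Φ * FF1 c1 τ1 m γ0 γ1),
              by rw [← heq]; ring, ?_, ?_⟩
      · intro i j hij
        rw [map_sub, MvPowerSeries.coeff_C_mul, coeff_mul_FF2]
        simp only [ee_apply0, ee_apply1]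
        have tδ : (if δ0 ≤ i ∧ δ1 ≤ j then
            MvPowerSeries.coeff (ee (i - δ0) (j - δ1)) Φ * τ2 else 0) = 0 := by
          split_ifs with h
          · rw [coeffΦ, if_neg (by omega), zero_mul]
          · rfl
        rw [tδ]
        rcases Nat.lt_or_ge (i + j + m) N with hlt | hge
        · rw [hu i j hlt]
          have tβ : (if k ≤ j then
              MvPowerSeries.coeff (ee i (j - k)) Φ * c2 else 0) = 0 := by
            split_ifs with h
            · rw [coeffΦ, if_neg (by omega), zero_mul]
            · rfl
          rw [tβ]
          ring
        · have hNe : i + j + m = N := by omega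
          by_cases hk1 : k ≤ j
          · rw [if_pos hk1, coeffΦ, if_pos (by omega)]
            have h2 : j - k + k = j := by omega
            rw [h2]
            field_simp
            ring
          · rw [if_neg hk1, ha i j hNe (by omega)]
            ring
      · intro i j hij
        rw [map_add, MvPowerSeries.coeff_C_mul, coeff_mul_FF1]
        simp only [ee_apply0, ee_apply1]
        have tγ : (if γ0 ≤ i ∧ γ1 ≤ j then
            MvPowerSeries.coeff (ee (i - γ0) (j - γ1)) Φ * τ1 else 0) = 0 := by
          split_ifs with h
          · rw [coeffΦ, if_neg (by omega), zero_mul]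
          · rfl
        rw [tγ]
        rcases Nat.lt_or_ge (i + j + k) N with hlt | hge
        · rw [hv i j hlt]
          have tα : (if m ≤ i then
              MvPowerSeries.coeff (ee (i - m) j) Φ * c1 else 0) = 0 := by
            split_ifs with h
            · rw [coeffΦ, if_neg (by omega), zero_mul]
            · rfl
          rw [tα]
          ring
        · have hNe : i + j + k = N := by omega
          by_cases hm1 : m ≤ i
          · rw [if_pos hm1, coeffΦ, if_pos (by omega)]
            have h := hcc i j hNe hm1
            have hinv : c2⁻¹ * c2 = 1 := inv_mul_cancel₀ hc2
            calc MvPowerSeries.coeff (ee i j) v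
                  + c2⁻¹ * (MvPowerSeries.coeff (ee (i - m) (j + k)) u * c1 - 0)
                = c2⁻¹ * (MvPowerSeries.coeff (ee i j) v * c2
                    + (MvPowerSeries.coeff (ee (i - m) (j + k)) u * c1)) := by
                  field_simp
                  ring
              _ = 0 := by rw [h]; ring
          · rw [if_neg hm1, hb i j hNe (by omega)]
            ring
  apply MvPowerSeries.ext
  intro e
  obtain ⟨u, v, heq, hu, hv⟩ := key (e 0 + e 1 + m + k + 1)
  have t1 : (if m ≤ e 0 then MvPowerSeries.coeff (ee (e 0 - m) (e 1)) u * c1 else 0) = 0 := by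
    split_ifs with h
    · rw [hu _ _ (by omega), zero_mul]
    · rfl
  have t2 : (if γ0 ≤ e 0 ∧ γ1 ≤ e 1 then
      MvPowerSeries.coeff (ee (e 0 - γ0) (e 1 - γ1)) u * τ1 else 0) = 0 := by
    split_ifs with h
    · rw [hu _ _ (by omega), zero_mul]
    · rfl
  have t3 : (if k ≤ e 1 then MvPowerSeries.coeff (ee (e 0) (e 1 - k)) v * c2 else 0) = 0 := by
    split_ifs with h
    · rw [hv _ _ (by omega), zero_mul]
    · rfl
  have t4 : (if δ0 ≤ e 0 ∧ δ1 ≤ e 1 then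
      MvPowerSeries.coeff (ee (e 0 - δ0) (e 1 - δ1)) v * τ2 else 0) = 0 := by
    split_ifs with h
    · rw [hv _ _ (by omega), zero_mul]
    · rfl
  rw [← heq, map_add, coeff_mul_FF1, coeff_mul_FF2, t1, t2, t3, t4]
  simp

end Inj

noncomputable section CoreThm

variable (c1 c2 τ1 τ2 : ℂ) (m k γ0 γ1 δ0 δ1 : ℕ)

def boxSer (c : Fin m × Fin k → ℂ) : R2 :=
  ser (fun i j => if h : i < m ∧ j < k then c (⟨i, h.1⟩, ⟨j, h.2⟩) else 0)

lemma coeff_boxSer (c : Fin m × Fin k → ℂ) (e : Fin 2 →₀ ℕ) :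
    MvPowerSeries.coeff e (boxSer m k c) =
      if h : e 0 < m ∧ e 1 < k then c (⟨e 0, h.1⟩, ⟨e 1, h.2⟩) else 0 := by
  rw [boxSer, coeff_ser]

def boxLin : (Fin m × Fin k → ℂ) →ₗ[ℂ] R2 where
  toFun := boxSer m k
  map_add' c c' := by
    apply MvPowerSeries.ext
    intro e
    rw [map_add, coeff_boxSer, coeff_boxSer, coeff_boxSer]
    split_ifs <;> simp
  map_smul' a c := by
    apply MvPowerSeries.ext
    intro e
    rw [RingHom.id_apply, MvPowerSeries.coeff_smul, coeff_boxSer, coeff_boxSer]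
    split_ifs <;> simp

theorem core_finrank (hmk : m < k) (hc1 : c1 ≠ 0) (hc2 : c2 ≠ 0)
    (hγ : γ0 + γ1 = k + 1) (hδ : δ0 + δ1 = k + 1) :
    Module.finrank ℂ
      (R2 ⧸ Ideal.span {FF1 c1 τ1 m γ0 γ1, FF2 c2 τ2 k δ0 δ1}) = m * k := by
  set J : Ideal R2 := Ideal.span {FF1 c1 τ1 m γ0 γ1, FF2 c2 τ2 k δ0 δ1} with hJ
  set Θ : (Fin m × Fin k → ℂ) →ₗ[ℂ] R2 ⧸ J :=
    ((Ideal.Quotient.mkₐ ℂ J).toLinearMap).comp (boxLin m k) with hΘ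
  have hΘapp : ∀ c, Θ c = Ideal.Quotient.mk J (boxSer m k c) := fun c => rfl
  have hinj : Function.Injective Θ := by
    rw [injective_iff_map_eq_zero]
    intro c hc
    have hmem : boxSer m k c ∈ J := by
      rw [← Ideal.Quotient.eq_zero_iff_mem]
      exact hc
    have hzero : boxSer m k c = 0 := by
      apply small_eq_zero_of_mem hγ hδ hmk hc1 hc2
      · intro e he
        rw [coeff_boxSer, dif_neg he]
      · exact hmem
    funext ij
    have := congrArg (MvPowerSeries.coeff (ee ij.1.1 ij.2.1)) hzero
    rw [coeff_boxSer] at this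
    simp only [ee_apply0, ee_apply1, map_zero] at this
    rw [dif_pos (⟨ij.1.2, ij.2.2⟩ : (ij.1 : ℕ) < m ∧ (ij.2 : ℕ) < k)] at this
    simpa using this
  have hsurj : Function.Surjective Θ := by
    intro x
    obtain ⟨F, rfl⟩ := Ideal.Quotient.mk_surjective x
    set f : ℕ → ℕ → ℂ := fun i j => MvPowerSeries.coeff (ee i j) F with hf
    set U : R2 := ser (fun i j => (uv c1 c2 τ1 τ2 f m k γ0 γ1 δ0 δ1 hγ hδ hmk i j).1) with hU
    set V : R2 := ser (fun i j => (uv c1 c2 τ1 τ2 f m k γ0 γ1 δ0 δ1 hγ hδ hmk i j).2) with hV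
    set W : R2 := U * FF1 c1 τ1 m γ0 γ1 + V * FF2 c2 τ2 k δ0 δ1 with hW
    refine ⟨fun ij => MvPowerSeries.coeff (ee ij.1.1 ij.2.1) (F - W), ?_⟩
    rw [hΘapp]
    have hbox : boxSer m k (fun ij => MvPowerSeries.coeff (ee ij.1.1 ij.2.1) (F - W))
        = F - W := by
      apply MvPowerSeries.ext
      intro e
      rw [coeff_boxSer]
      split_ifs with h
      · simp [ee_eta]
      · rw [map_sub]
        have := normal_form c1 c2 τ1 τ2 hγ hδ hmk hc1 hc2 F e h
        rw [← hf, ← hU, ← hV, ← hW] at this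
        rw [← this, sub_self]
    rw [hbox]
    rw [Ideal.Quotient.eq]
    have : F - W - F = -W := by ring
    rw [this]
    exact neg_mem (Ideal.mem_span_pair.mpr ⟨U, V, rfl⟩)
  have equiv := LinearEquiv.ofBijective Θ ⟨hinj, hsurj⟩
  rw [← equiv.finrank_eq, Module.finrank_fintype_fun_eq_card, Fintype.card_prod,
    Fintype.card_fin, Fintype.card_fin]

end CoreThm


noncomputable section Final

lemma coe_CXX (c : ℂ) (s r : ℕ) :
    ((MvPolynomial.C c * (MvPolynomial.X 0 ^ s * MvPolynomial.X 1 ^ r) :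
        MvPolynomial (Fin 2) ℂ) : R2) = Mono s r c := by
  rw [MvPolynomial.coe_mul, MvPolynomial.coe_mul, MvPolynomial.coe_pow, MvPolynomial.coe_pow,
    MvPolynomial.coe_C, MvPolynomial.coe_X, MvPolynomial.coe_X]
  rw [MvPowerSeries.X_pow_eq, MvPowerSeries.X_pow_eq, MvPowerSeries.monomial_mul_monomial,
    ← MvPowerSeries.monomial_zero_eq_C_apply, MvPowerSeries.monomial_mul_monomial]
  rw [Mono, ee]
  rw [zero_add, one_mul, mul_one]

lemma coe_sub' (f g : MvPolynomial (Fin 2) ℂ) :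
    ((f - g : MvPolynomial (Fin 2) ℂ) : R2) = (f : R2) - (g : R2) :=
  map_sub (MvPolynomial.coeToMvPowerSeries.ringHom) f g

theorem milnor_t (a b p q : ℕ) (ha : 1 ≤ a) (hb : 1 ≤ b) (hp : 1 ≤ p) (hq : 1 ≤ q)
    (habpq : a + b + 1 = p + q) (t : ℂ) :
    milnor ((MvPolynomial.X 1) ^ (a + b) + (MvPolynomial.X 0) ^ b
        - MvPolynomial.C t * (MvPolynomial.X 0) ^ p * (MvPolynomial.X 1) ^ q) =
      (b - 1) * (a + b - 1) := by
  have hd0 : MvPolynomial.pderiv 0 ((MvPolynomial.X 1) ^ (a + b) + (MvPolynomial.X 0) ^ b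
        - MvPolynomial.C t * (MvPolynomial.X 0) ^ p * (MvPolynomial.X 1) ^ q
        : MvPolynomial (Fin 2) ℂ) =
      MvPolynomial.C ((b : ℂ)) * (MvPolynomial.X 0 ^ (b - 1) * MvPolynomial.X 1 ^ 0)
        - MvPolynomial.C (t * p) * (MvPolynomial.X 0 ^ (p - 1) * MvPolynomial.X 1 ^ q) := by
    simp [MvPolynomial.pderiv_mul, MvPolynomial.pderiv_pow, MvPolynomial.pderiv_X_self,
      MvPolynomial.pderiv_X_of_ne (show (1 : Fin 2) ≠ 0 by decide), MvPolynomial.pderiv_C]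
    ring
  have hd1 : MvPolynomial.pderiv 1 ((MvPolynomial.X 1) ^ (a + b) + (MvPolynomial.X 0) ^ b
        - MvPolynomial.C t * (MvPolynomial.X 0) ^ p * (MvPolynomial.X 1) ^ q
        : MvPolynomial (Fin 2) ℂ) =
      MvPolynomial.C (((a + b : ℕ) : ℂ)) *
          (MvPolynomial.X 0 ^ 0 * MvPolynomial.X 1 ^ (a + b - 1))
        - MvPolynomial.C (t * q) * (MvPolynomial.X 0 ^ p * MvPolynomial.X 1 ^ (q - 1)) := by
    simp [MvPolynomial.pderiv_mul, MvPolynomial.pderiv_pow, MvPolynomial.pderiv_X_self,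
      MvPolynomial.pderiv_X_of_ne (show (0 : Fin 2) ≠ 1 by decide), MvPolynomial.pderiv_C]
    ring
  rw [milnor, hd0, hd1, coe_sub', coe_sub', coe_CXX, coe_CXX, coe_CXX, coe_CXX]
  rw [show Mono (b - 1) 0 ((b : ℂ)) - Mono (p - 1) q (t * ↑p)
      = FF1 ((b : ℂ)) (t * p) (b - 1) (p - 1) q from rfl]
  rw [show Mono 0 (a + b - 1) (((a + b : ℕ) : ℂ)) - Mono p (q - 1) (t * ↑q)
      = FF2 (((a + b : ℕ) : ℂ)) (t * q) (a + b - 1) p (q - 1) from rfl]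
  rw [core_finrank ((b : ℂ)) (((a + b : ℕ) : ℂ)) (t * p) (t * q) (b - 1) (a + b - 1)
    (p - 1) q p (q - 1) (by omega)
    (Nat.cast_ne_zero.mpr (by omega)) (Nat.cast_ne_zero.mpr (by omega))
    (by omega) (by omega)]

end Final

/-- in the chart x = 1 (coordinates (y,z) with `X 0 = y`, `X 1 = z`),
the family of germs `z^{a+b} + y^b − t y^p z^q` has uniform Brieskorn type (b, a+b):
the Milnor number equals (b−1)(a+b−1) for every t, so it is constant in t and there
is no jump (λ = 0) at the point [1:0:0]. -/

theorem stmt_13 (a b p q : ℕ) (ha : 1 ≤ a) (hb : 1 ≤ b) (hp : 1 ≤ p) (hq : 1 ≤ q)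
    (habpq : a + b + 1 = p + q) :
    ∀ t : ℂ,
      milnor ((X 1) ^ (a + b) + (X 0) ^ b - C t * (X 0) ^ p * (X 1) ^ q) =
        (b - 1) * (a + b - 1) ∧
      milnor ((X 1) ^ (a + b) + (X 0) ^ b - C t * (X 0) ^ p * (X 1) ^ q) =
        milnor ((X 1) ^ (a + b) + (X 0) ^ b) := by
  intro t
  have h0 : milnor ((X 1) ^ (a + b) + (X 0) ^ b) = (b - 1) * (a + b - 1) := by
    have := milnor_t a b p q ha hb hp hq habpq 0
    simpa using this
  exact ⟨milnor_t a b p q ha hb hp hq habpq t,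
    by rw [milnor_t a b p q ha hb hp hq habpq t, h0]⟩
end
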